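/- The series ∑_{n≥0} q^{2n} (q^{2n+2};q²)_∞² / (q^{2n+1};q²)_∞² equals ∑_{n≥0} q^n / (1 - q^{2n+1}) as formal power series in q, and in particular all its coefficients are strictly positive. -/

import Mathlib

open Finset PowerSeries

/-- `(q^a; q^2)_n = ∏_{j<n} (1 - q^(a+2j))` as a formal power series in `q`. -/
noncomputable def P2 (a n : ℕ) : PowerSeries ℚ :=
  ∏ j ∈ Finset.range n, (1 - (PowerSeries.X : PowerSeries ℚ) ^ (a + 2 * j))

/-- `(q^a; q^2)_∞ = ∏_{j≥0} (1 - q^(a+2j))` (for `a ≥ 1`) as a formal power series. -/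
noncomputable def P2inf (a : ℕ) : PowerSeries ℚ :=
  PowerSeries.mk fun m => PowerSeries.coeff m (P2 a (m + 1))

abbrev RR := PowerSeries ℚ

-- basic coefficient facts
lemma coeff_mul_one_sub_X_pow (A : RR) {e m : ℕ} (he : m < e) :
    PowerSeries.coeff m (A * (1 - X ^ e)) = PowerSeries.coeff m A := by
  rw [mul_sub, mul_one, map_sub, PowerSeries.coeff_mul_X_pow', if_neg (by omega), sub_zero]

lemma constCoeff_P2 (a n : ℕ) (ha : 1 ≤ a) : PowerSeries.constantCoeff (P2 a n) = 1 := by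
  rw [P2, map_prod]
  apply Finset.prod_eq_one
  intro j _
  rw [map_sub, map_one, map_pow, PowerSeries.constantCoeff_X, zero_pow (by omega), sub_zero]

lemma P2_ne_zero (a n : ℕ) (ha : 1 ≤ a) : P2 a n ≠ 0 := by
  intro h
  have := constCoeff_P2 a n ha
  rw [h, map_zero] at this
  exact one_ne_zero this.symm

lemma P2_succ (a n : ℕ) : P2 a (n + 1) = P2 a n * (1 - X ^ (a + 2 * n)) :=
  Finset.prod_range_succ _ _

-- stabilization
lemma coeff_P2_stable (a : ℕ) (ha : 1 ≤ a) {m : ℕ} {N N' : ℕ} (hN : m ≤ N) (hN' : m ≤ N') :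
    PowerSeries.coeff m (P2 a N) = PowerSeries.coeff m (P2 a N') := by
  have key : ∀ k : ℕ, PowerSeries.coeff m (P2 a (m + k)) = PowerSeries.coeff m (P2 a m) := by
    intro k
    induction k with
    | zero => rfl
    | succ k ih =>
      rw [show m + (k+1) = (m+k)+1 by omega, P2_succ,
        coeff_mul_one_sub_X_pow _ (by omega), ih]
  obtain ⟨k, rfl⟩ := Nat.exists_eq_add_of_le hN
  obtain ⟨k', rfl⟩ := Nat.exists_eq_add_of_le hN'
  rw [key, key]

lemma coeff_P2inf (a : ℕ) (ha : 1 ≤ a) {m N : ℕ} (hN : m ≤ N) :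
    PowerSeries.coeff m (P2inf a) = PowerSeries.coeff m (P2 a N) := by
  rw [P2inf, PowerSeries.coeff_mk]
  exact coeff_P2_stable a ha (by omega) hN

lemma constCoeff_P2inf (a : ℕ) (ha : 1 ≤ a) : PowerSeries.constantCoeff (P2inf a) = 1 := by
  have := coeff_P2inf a ha (m := 0) (N := 0) (by omega)
  rw [← PowerSeries.coeff_zero_eq_constantCoeff, this, P2,
    Finset.range_zero, Finset.prod_empty, PowerSeries.coeff_zero_eq_constantCoeff, map_one]

lemma P2inf_ne_zero (a : ℕ) (ha : 1 ≤ a) : P2inf a ≠ 0 := by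
  intro h
  have := constCoeff_P2inf a ha
  rw [h, map_zero] at this
  exact one_ne_zero this.symm

-- coeff_mul congruence helper
lemma coeff_mul_congr_right (A B B' : RR) (m : ℕ)
    (h : ∀ k, k ≤ m → PowerSeries.coeff k B = PowerSeries.coeff k B') :
    PowerSeries.coeff m (A * B) = PowerSeries.coeff m (A * B') := by
  rw [PowerSeries.coeff_mul, PowerSeries.coeff_mul]
  apply Finset.sum_congr rfl
  intro p hp
  rw [h p.2 (by have := Finset.HasAntidiagonal.antidiagonal.snd_le hp; omega)]

-- the fundamental product step
lemma Pstep (a : ℕ) (ha : 1 ≤ a) : P2inf a = (1 - X ^ a) * P2inf (a + 2) := by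
  ext m
  rw [coeff_P2inf a ha (N := m + 1) (by omega)]
  have h1 : P2 a (m + 1) = (1 - X ^ a) * P2 (a + 2) m := by
    rw [P2, Finset.prod_range_succ']
    rw [P2]
    simp only [mul_zero, add_zero]
    rw [mul_comm]
    congr 1
    apply Finset.prod_congr rfl
    intro j _
    congr 1
    ring
  rw [h1]
  exact coeff_mul_congr_right _ _ _ m
    (fun k hk => (coeff_P2inf (a+2) (by omega) (N := m) hk).symm)

lemma P2inf_split (a : ℕ) (ha : 1 ≤ a) (n : ℕ) :
    P2inf a = P2 a n * P2inf (a + 2 * n) := by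
  induction n with
  | zero => simp [P2, P2inf]
  | succ n ih =>
    rw [ih, Pstep (a + 2*n) (by omega), show a + 2*n + 2 = a + 2*(n+1) by omega, P2_succ]
    ring

-- tail triviality
lemma coeff_P2inf_high (a : ℕ) {m : ℕ} (hm : m < a) :
    PowerSeries.coeff m (P2inf a) = PowerSeries.coeff m (1 : RR) := by
  rw [coeff_P2inf a (by omega) (N := m) (le_refl m)]
  have : ∀ N : ℕ, PowerSeries.coeff m (P2 a N) = PowerSeries.coeff m (1 : RR) := by
    intro N
    induction N with
    | zero => rw [P2, Finset.range_zero, Finset.prod_empty]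
    | succ N ih => rw [P2_succ, coeff_mul_one_sub_X_pow _ (by omega), ih]
  exact this m
/-- truncated sum of a family of power series -/
noncomputable def msum (f : ℕ → RR) : RR :=
  PowerSeries.mk fun m => ∑ n ∈ Finset.range (m + 1), PowerSeries.coeff m (f n)

def OrdF (f : ℕ → RR) : Prop := ∀ n m : ℕ, m < n → PowerSeries.coeff m (f n) = 0

lemma coeff_msum (f : ℕ → RR) (m : ℕ) :
    PowerSeries.coeff m (msum f) = ∑ n ∈ Finset.range (m + 1), PowerSeries.coeff m (f n) :=
  PowerSeries.coeff_mk _ _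

lemma coeff_msum' (f : ℕ → RR) (hf : OrdF f) {m N : ℕ} (hN : m < N) :
    PowerSeries.coeff m (msum f) = ∑ n ∈ Finset.range N, PowerSeries.coeff m (f n) := by
  rw [coeff_msum]
  apply Finset.sum_subset
  · exact Finset.range_subset_range.2 hN
  · intro n _ hn
    exact hf n m (by simpa using hn)

lemma msum_congr {f g : ℕ → RR} (h : ∀ n, f n = g n) : msum f = msum g := by
  ext m; simp only [coeff_msum, h]

lemma msum_add (f g : ℕ → RR) : msum f + msum g = msum (fun n => f n + g n) := by
  ext m; simp [coeff_msum, Finset.sum_add_distrib]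

lemma mul_msum (C : RR) (f : ℕ → RR) (hf : OrdF f) :
    C * msum f = msum (fun n => C * f n) := by
  ext m
  rw [coeff_msum, PowerSeries.coeff_mul]
  have : ∀ n ∈ Finset.range (m+1), PowerSeries.coeff m (C * f n)
      = ∑ p ∈ Finset.HasAntidiagonal.antidiagonal m, PowerSeries.coeff p.1 C * PowerSeries.coeff p.2 (f n) := by
    intro n _; rw [PowerSeries.coeff_mul]
  rw [Finset.sum_congr rfl this, Finset.sum_comm]
  apply Finset.sum_congr rfl
  intro p hp
  have hp2 : p.2 ≤ m := by
    have := Finset.HasAntidiagonal.antidiagonal.snd_le hp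
    omega
  rw [coeff_msum, ← Finset.mul_sum]
  congr 1
  apply Finset.sum_subset
  · exact Finset.range_subset_range.2 (by omega)
  · intro n _ hn
    exact hf n p.2 (by simpa using hn)

lemma msum_msum (H : ℕ → ℕ → RR) :
    msum (fun n => msum (fun k => H n k)) = msum (fun k => msum (fun n => H n k)) := by
  ext m
  simp only [coeff_msum]
  exact Finset.sum_comm

lemma msum_shift (u : ℕ → RR) (hu : OrdF u) (h0 : u 0 = 0) :
    msum u = msum (fun n => u (n + 1)) := by
  ext m
  rw [coeff_msum, coeff_msum]
  rw [Finset.sum_range_succ' (fun n => PowerSeries.coeff m (u n)) m]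
  rw [Finset.sum_range_succ (fun n => PowerSeries.coeff m (u (n+1))) m]
  rw [h0, map_zero, add_zero, hu (m+1) m (by omega), add_zero]

noncomputable def dd (n : ℕ) : RR := P2 1 n * (P2 2 n)⁻¹
noncomputable def gg (a : ℕ) : RR := msum (fun n => dd n * X ^ (a * n))

lemma coeff_ord {A : RR} {c m : ℕ} (h : m < c) : PowerSeries.coeff m (A * X ^ c) = 0 := by
  rw [PowerSeries.coeff_mul_X_pow', if_neg (by omega)]

lemma ord_dX {a : ℕ} (ha : 1 ≤ a) : OrdF (fun n => dd n * X ^ (a * n)) := by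
  intro n m hm
  exact coeff_ord (by nlinarith)

lemma inv_mul_P2 (a n : ℕ) (ha : 1 ≤ a) : (P2 a n)⁻¹ * P2 a n = 1 :=
  PowerSeries.inv_mul_cancel _ (by rw [constCoeff_P2 a n ha]; exact one_ne_zero)

lemma inv_mul_P2inf (a : ℕ) (ha : 1 ≤ a) : (P2inf a)⁻¹ * P2inf a = 1 :=
  PowerSeries.inv_mul_cancel _ (by rw [constCoeff_P2inf a ha]; exact one_ne_zero)

lemma dd_rec (n : ℕ) : dd (n+1) * (1 - X ^ (2*n+2)) = dd n * (1 - X ^ (2*n+1)) := by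
  apply mul_right_cancel₀ (P2_ne_zero 2 (n+1) (by omega))
  have h1 : P2 1 (n+1) = P2 1 n * (1 - X ^ (1 + 2*n)) := P2_succ 1 n
  have h2 : P2 2 (n+1) = P2 2 n * (1 - X ^ (2 + 2*n)) := P2_succ 2 n
  have c1 : (P2 2 (n+1))⁻¹ * P2 2 (n+1) = 1 := inv_mul_P2 2 (n+1) (by omega)
  have c2 : (P2 2 n)⁻¹ * P2 2 n = 1 := inv_mul_P2 2 n (by omega)
  calc dd (n+1) * (1 - X ^ (2*n+2)) * P2 2 (n+1)
      = P2 1 (n+1) * (1 - X ^ (2*n+2)) * ((P2 2 (n+1))⁻¹ * P2 2 (n+1)) := by rw [dd]; ring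
    _ = P2 1 n * (1 - X ^ (2*n+1)) * (1 - X ^ (2*n+2)) := by
        rw [c1, mul_one, h1]; ring_nf
    _ = dd n * (1 - X ^ (2*n+1)) * P2 2 (n+1) := by
        rw [dd, h2]
        calc P2 1 n * (1 - X ^ (2*n+1)) * (1 - X ^ (2*n+2))
            = P2 1 n * (1 - X ^ (2*n+1)) * (1 - X ^ (2 + 2*n)) * ((P2 2 n)⁻¹ * P2 2 n) := by
              rw [c2, mul_one]; ring_nf
          _ = P2 1 n * (P2 2 n)⁻¹ * (1 - X ^ (2*n+1)) * (P2 2 n * (1 - X ^ (2 + 2*n))) := by ring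

lemma msum_sub (f g : ℕ → RR) : msum f - msum g = msum (fun n => f n - g n) := by
  ext m; simp [coeff_msum, Finset.sum_sub_distrib]

lemma gg_rec (a : ℕ) (ha : 1 ≤ a) :
    (1 - X ^ a) * gg a = (1 - X ^ (a+1)) * gg (a+2) := by
  rw [gg, gg, mul_msum _ _ (ord_dX ha), mul_msum _ _ (ord_dX (by omega))]
  set u : ℕ → RR := fun n => dd n * (1 - X ^ (2*n)) * X ^ (a*n) with hu
  have hord : OrdF u := by
    intro n m hm
    exact coeff_ord (by nlinarith)
  have h0 : u 0 = 0 := by simp [hu]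
  have key : ∀ n, (1 - X ^ a) * (dd n * X ^ (a*n))
      = (1 - X ^ (a+1)) * (dd n * X ^ ((a+2)*n)) + u n - u (n+1) := by
    intro n
    simp only [hu]
    linear_combination (X : RR) ^ (a*n+a) * dd_rec n
  calc msum (fun n => (1 - X ^ a) * (dd n * X ^ (a*n)))
      = msum (fun n => (1 - X ^ (a+1)) * (dd n * X ^ ((a+2)*n)) + u n - u (n+1)) :=
        msum_congr key
    _ = msum (fun n => (1 - X ^ (a+1)) * (dd n * X ^ ((a+2)*n)) + u n) - msum (fun n => u (n+1)) := by
        rw [msum_sub]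
    _ = msum (fun n => (1 - X ^ (a+1)) * (dd n * X ^ ((a+2)*n))) + msum u - msum (fun n => u (n+1)) := by
        rw [msum_add]
    _ = msum (fun n => (1 - X ^ (a+1)) * (dd n * X ^ ((a+2)*n))) := by
        rw [← msum_shift u hord h0]; ring

lemma dd_zero : dd 0 = 1 := by
  have : P2 2 0 = 1 := by simp [P2]
  have h := inv_mul_P2 2 0 (by omega)
  rw [this, mul_one] at h
  rw [dd, this, h]
  simp [P2]

lemma gg_low {a k : ℕ} (hk : k < a) :
    PowerSeries.coeff k (gg a) = PowerSeries.coeff k (1 : RR) := by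
  rw [gg, coeff_msum]
  rw [Finset.sum_eq_single 0]
  · simp [dd_zero]
  · intro n _ hn
    exact coeff_ord (by nlinarith [Nat.one_le_iff_ne_zero.2 hn])
  · simp

lemma qbinom (a : ℕ) (ha : 1 ≤ a) : P2inf (a+1) = P2inf a * gg a := by
  set D : ℕ → RR := fun a => P2inf (a+1) - P2inf a * gg a with hD
  suffices h : ∀ m, ∀ b, 1 ≤ b → PowerSeries.coeff m (D b) = 0 by
    have : D a = 0 := by
      ext m; rw [map_zero]; exact h m a ha
    have := sub_eq_zero.mp this
    exact this
  have htail : ∀ m b, m < b → PowerSeries.coeff m (D b) = 0 := by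
    intro m b hmb
    have hb1 : 1 ≤ b := by omega
    rw [hD]
    simp only [map_sub]
    have e1 : PowerSeries.coeff m (P2inf (b+1)) = PowerSeries.coeff m (1 : RR) :=
      coeff_P2inf_high (b+1) (by omega)
    have e2 : PowerSeries.coeff m (P2inf b * gg b) = PowerSeries.coeff m (1 : RR) := by
      have := coeff_mul_congr_right (P2inf b) (gg b) 1 m
        (fun k hk => gg_low (by omega))
      rw [this, mul_one, coeff_P2inf_high b hmb]
    rw [e1, e2, sub_self]
  have hfunc : ∀ b, 1 ≤ b → D b = D (b+2) - X ^ (b+1) * D (b+2) := by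
    intro b hb
    have hu : P2inf b * gg b = (1 - X ^ (b+1)) * (P2inf (b+2) * gg (b+2)) := by
      calc P2inf b * gg b = ((1 - X ^ b) * P2inf (b+2)) * gg b := by rw [← Pstep b hb]
        _ = P2inf (b+2) * ((1 - X ^ b) * gg b) := by ring
        _ = P2inf (b+2) * ((1 - X ^ (b+1)) * gg (b+2)) := by rw [gg_rec b hb]
        _ = (1 - X ^ (b+1)) * (P2inf (b+2) * gg (b+2)) := by ring
    have hv : P2inf (b+1) = (1 - X ^ (b+1)) * P2inf (b+3) := by
      have h := Pstep (b+1) (by omega)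
      rwa [show b+1+2 = b+3 by omega] at h
    rw [hD]
    simp only
    rw [hu, hv, show b+2+1 = b+3 from rfl]
    ring
  intro m
  induction m using Nat.strong_induction_on with
  | _ m IH =>
    have hstep : ∀ b, 1 ≤ b → PowerSeries.coeff m (D b) = PowerSeries.coeff m (D (b+2)) := by
      intro b hb
      rw [hfunc b hb, map_sub, PowerSeries.coeff_X_pow_mul']
      by_cases hbm : b + 1 ≤ m
      · rw [if_pos hbm, IH (m - (b+1)) (by omega) (b+2) (by omega), sub_zero]
      · rw [if_neg hbm, sub_zero]
    have iter : ∀ k b, 1 ≤ b → PowerSeries.coeff m (D b) = PowerSeries.coeff m (D (b + 2*k)) := by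
      intro k
      induction k with
      | zero => intro b _; rfl
      | succ k ihk =>
        intro b hb
        rw [hstep b hb, show b + 2*(k+1) = (b+2) + 2*k by omega]
        exact ihk (b+2) (by omega)
    intro b hb
    rw [iter (m+1) b hb]
    exact htail m (b + 2*(m+1)) (by omega)

noncomputable def psi : RR := P2inf 2 * (P2inf 1)⁻¹

lemma psi_dd (k : ℕ) : psi * dd k * P2inf (2*k+1) = P2inf (2*k+2) := by
  have s1 : P2inf 1 = P2 1 k * P2inf (2*k+1) := by
    have := P2inf_split 1 le_rfl k
    rwa [show 1 + 2*k = 2*k+1 by omega] at this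
  have s2 : P2inf 2 = P2 2 k * P2inf (2*k+2) := by
    have := P2inf_split 2 (by omega) k
    rwa [show 2 + 2*k = 2*k+2 by omega] at this
  calc psi * dd k * P2inf (2*k+1)
      = P2inf 2 * (P2 2 k)⁻¹ * ((P2inf 1)⁻¹ * (P2 1 k * P2inf (2*k+1))) := by
        rw [psi, dd]; ring
    _ = P2inf 2 * (P2 2 k)⁻¹ := by rw [← s1, inv_mul_P2inf 1 le_rfl, mul_one]
    _ = P2inf (2*k+2) * ((P2 2 k)⁻¹ * P2 2 k) := by rw [s2]; ring
    _ = P2inf (2*k+2) := by rw [inv_mul_P2 2 k (by omega), mul_one]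

lemma term_simp (n : ℕ) :
    X ^ (2*n) * P2inf (2*n+2) ^ 2 * (P2inf (2*n+1) ^ 2)⁻¹
      = psi * (dd n * X ^ (2*n) * gg (2*n+1)) := by
  have hne : (P2inf (2*n+1) ^ 2) ≠ 0 := pow_ne_zero 2 (P2inf_ne_zero _ (by omega))
  apply mul_right_cancel₀ hne
  have hc : (P2inf (2*n+1) ^ 2)⁻¹ * P2inf (2*n+1) ^ 2 = 1 :=
    PowerSeries.inv_mul_cancel _ (by
      rw [map_pow, constCoeff_P2inf _ (by omega), one_pow]; exact one_ne_zero)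
  have hb : P2inf (2*n+1) * gg (2*n+1) = P2inf (2*n+2) := by
    have := qbinom (2*n+1) (by omega)
    rw [show 2*n+1+1 = 2*n+2 by omega] at this
    exact this.symm
  calc X ^ (2*n) * P2inf (2*n+2) ^ 2 * (P2inf (2*n+1) ^ 2)⁻¹ * P2inf (2*n+1) ^ 2
      = X ^ (2*n) * P2inf (2*n+2) ^ 2 * ((P2inf (2*n+1) ^ 2)⁻¹ * P2inf (2*n+1) ^ 2) := by ring
    _ = X ^ (2*n) * P2inf (2*n+2) ^ 2 := by rw [hc, mul_one]
    _ = X ^ (2*n) * ((psi * dd n * P2inf (2*n+1)) * (P2inf (2*n+1) * gg (2*n+1))) := by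
        rw [psi_dd, hb]; ring
    _ = psi * (dd n * X ^ (2*n) * gg (2*n+1)) * P2inf (2*n+1) ^ 2 := by ring

lemma one_sub_X_pow_ne {e : ℕ} (he : 1 ≤ e) : (1 - X ^ e : RR) ≠ 0 := by
  intro h
  have : PowerSeries.constantCoeff (1 - X ^ e : RR) = 1 := by
    rw [map_sub, map_one, map_pow, PowerSeries.constantCoeff_X, zero_pow (by omega), sub_zero]
  rw [h, map_zero] at this
  exact one_ne_zero this.symm

lemma inv_mul_one_sub_X_pow {e : ℕ} (he : 1 ≤ e) :
    ((1 - X ^ e : RR))⁻¹ * (1 - X ^ e) = 1 :=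
  PowerSeries.inv_mul_cancel _ (by
    rw [map_sub, map_one, map_pow, PowerSeries.constantCoeff_X, zero_pow (by omega), sub_zero]
    exact one_ne_zero)

lemma term_final (k : ℕ) :
    psi * (dd k * X ^ k * gg (2*k+2)) = X ^ k * (1 - X ^ (2*k+1))⁻¹ := by
  have key : psi * dd k * gg (2*k+2) * (1 - X ^ (2*k+1)) = 1 := by
    apply mul_right_cancel₀ (P2inf_ne_zero (2*k+3) (by omega))
    have h1 : (1 - X ^ (2*k+1)) * P2inf (2*k+3) = P2inf (2*k+1) := by
      have := Pstep (2*k+1) (by omega)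
      rw [show 2*k+1+2 = 2*k+3 by omega] at this
      exact this.symm
    have h2 : P2inf (2*k+2) * gg (2*k+2) = P2inf (2*k+3) := by
      have := qbinom (2*k+2) (by omega)
      rw [show 2*k+2+1 = 2*k+3 by omega] at this
      exact this.symm
    calc psi * dd k * gg (2*k+2) * (1 - X ^ (2*k+1)) * P2inf (2*k+3)
        = psi * dd k * P2inf (2*k+1) * gg (2*k+2) := by
          rw [show psi * dd k * gg (2*k+2) * (1 - X ^ (2*k+1)) * P2inf (2*k+3)
            = psi * dd k * ((1 - X ^ (2*k+1)) * P2inf (2*k+3)) * gg (2*k+2) by ring, h1]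
      _ = P2inf (2*k+2) * gg (2*k+2) := by rw [psi_dd]
      _ = 1 * P2inf (2*k+3) := by rw [h2, one_mul]
  apply mul_right_cancel₀ (one_sub_X_pow_ne (e := 2*k+1) (by omega))
  calc psi * (dd k * X ^ k * gg (2*k+2)) * (1 - X ^ (2*k+1))
      = X ^ k * (psi * dd k * gg (2*k+2) * (1 - X ^ (2*k+1))) := by ring
    _ = X ^ k := by rw [key, mul_one]
    _ = X ^ k * ((1 - X ^ (2*k+1))⁻¹ * (1 - X ^ (2*k+1))) := by
        rw [inv_mul_one_sub_X_pow (by omega), mul_one]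
    _ = X ^ k * (1 - X ^ (2*k+1))⁻¹ * (1 - X ^ (2*k+1)) := by ring

lemma geo_eq {b : ℕ} (hb : 1 ≤ b) :
    ((1 - X ^ b : RR))⁻¹ = PowerSeries.mk (fun j => if b ∣ j then (1:ℚ) else 0) := by
  symm
  rw [PowerSeries.eq_inv_iff_mul_eq_one (by
    rw [map_sub, map_one, map_pow, PowerSeries.constantCoeff_X, zero_pow (by omega), sub_zero]
    exact one_ne_zero)]
  ext m
  rw [mul_sub, mul_one, map_sub, PowerSeries.coeff_mul_X_pow', PowerSeries.coeff_mk,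
    PowerSeries.coeff_one]
  by_cases hbm : b ≤ m
  · rw [if_pos hbm, PowerSeries.coeff_mk]
    have hdvd : b ∣ m ↔ b ∣ m - b := by
      constructor
      · intro h; exact (Nat.dvd_sub h (dvd_refl b))
      · intro h
        have : m = (m - b) + b := by omega
        rw [this]; exact Nat.dvd_add h (dvd_refl b)
    have hm0 : ¬ (m = 0) := by omega
    rw [if_neg hm0]
    by_cases h : b ∣ m
    · rw [if_pos h, if_pos (hdvd.1 h), sub_self]
    · rw [if_neg h, if_neg (fun hh => h (hdvd.2 hh)), sub_self]
  · rw [if_neg hbm, sub_zero]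
    by_cases hm0 : m = 0
    · subst hm0; rw [if_pos (dvd_zero b), if_pos rfl]
    · rw [if_neg hm0, if_neg (fun h => hm0 (Nat.eq_zero_of_dvd_of_lt h (by omega)))]

lemma ordA : OrdF (fun n => dd n * X ^ (2*n) * gg (2*n+1)) := by
  intro n m hm
  simp only []
  rw [show dd n * X ^ (2*n) * gg (2*n+1) = (dd n * gg (2*n+1)) * X ^ (2*n) by ring]
  exact coeff_ord (by omega)

lemma ordB : OrdF (fun k => dd k * X ^ k * gg (2*k+2)) := by
  intro n m hm
  simp only []
  rw [show dd n * X ^ n * gg (2*n+2) = (dd n * gg (2*n+2)) * X ^ n by ring]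
  exact coeff_ord (by omega)

lemma main_eq :
    msum (fun n => X ^ (2*n) * P2inf (2*n+2) ^ 2 * (P2inf (2*n+1) ^ 2)⁻¹)
      = msum (fun k => X ^ k * (1 - X ^ (2*k+1))⁻¹) := by
  calc msum (fun n => X ^ (2*n) * P2inf (2*n+2) ^ 2 * (P2inf (2*n+1) ^ 2)⁻¹)
      = msum (fun n => psi * (dd n * X ^ (2*n) * gg (2*n+1))) := msum_congr term_simp
    _ = psi * msum (fun n => dd n * X ^ (2*n) * gg (2*n+1)) := (mul_msum _ _ ordA).symm
    _ = psi * msum (fun n => msum (fun k => dd n * X ^ (2*n) * (dd k * X ^ ((2*n+1)*k)))) := by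
        congr 1
        exact msum_congr (fun n => mul_msum (dd n * X ^ (2*n)) _ (ord_dX (by omega)))
    _ = psi * msum (fun k => msum (fun n => dd n * X ^ (2*n) * (dd k * X ^ ((2*n+1)*k)))) := by
        rw [msum_msum]
    _ = psi * msum (fun k => dd k * X ^ k * gg (2*k+2)) := by
        congr 1
        apply msum_congr
        intro k
        calc msum (fun n => dd n * X ^ (2*n) * (dd k * X ^ ((2*n+1)*k)))
            = msum (fun n => (dd k * X ^ k) * (dd n * X ^ ((2*k+2)*n))) := by
              apply msum_congr; intro n; ring
          _ = dd k * X ^ k * gg (2*k+2) := (mul_msum _ _ (ord_dX (by omega))).symm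
    _ = msum (fun k => psi * (dd k * X ^ k * gg (2*k+2))) := mul_msum _ _ ordB
    _ = msum (fun k => X ^ k * (1 - X ^ (2*k+1))⁻¹) := msum_congr term_final


/-- The series `∑_{n≥0} q^{2n} (q^{2n+2};q²)_∞² / (q^{2n+1};q²)_∞²`, defined
coefficientwise (the `n`-th term has order at least `2n`). -/
noncomputable def F11 : PowerSeries ℚ :=
  PowerSeries.mk fun m => ∑ n ∈ Finset.range (m + 1),
    PowerSeries.coeff m
      ((PowerSeries.X : PowerSeries ℚ) ^ (2 * n) * P2inf (2 * n + 2) ^ 2 *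
        (P2inf (2 * n + 1) ^ 2)⁻¹)

lemma coeff_rhs_term (n m : ℕ) :
    PowerSeries.coeff m ((X : RR) ^ n * (1 - X ^ (2*n+1))⁻¹)
      = if n ≤ m ∧ (2*n+1) ∣ (m - n) then 1 else 0 := by
  rw [PowerSeries.coeff_X_pow_mul', geo_eq (by omega), PowerSeries.coeff_mk]
  by_cases h1 : n ≤ m
  · by_cases h2 : (2*n+1) ∣ (m - n)
    · rw [if_pos h1, if_pos h2, if_pos ⟨h1, h2⟩]
    · rw [if_pos h1, if_neg h2, if_neg (by tauto)]
  · rw [if_neg h1, if_neg (by tauto)]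


/-- `∑_{n≥0} q^{2n} (q^{2n+2};q²)_∞² / (q^{2n+1};q²)_∞² = ∑_{n≥0} q^n/(1-q^{2n+1})`
as formal power series, and all its coefficients are strictly positive. -/
theorem stmt_8 :
    (F11 = PowerSeries.mk fun m => ∑ n ∈ Finset.range (m + 1),
        PowerSeries.coeff m
          ((PowerSeries.X : PowerSeries ℚ) ^ n *
            (1 - (PowerSeries.X : PowerSeries ℚ) ^ (2 * n + 1))⁻¹)) ∧
      ∀ m : ℕ, 0 < PowerSeries.coeff m F11 := by
  have hF : F11 = msum (fun n => X ^ (2*n) * P2inf (2*n+2) ^ 2 * (P2inf (2*n+1) ^ 2)⁻¹) := rfl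
  have hR : (PowerSeries.mk fun m => ∑ n ∈ Finset.range (m + 1),
        PowerSeries.coeff m
          ((PowerSeries.X : PowerSeries ℚ) ^ n *
            (1 - (PowerSeries.X : PowerSeries ℚ) ^ (2 * n + 1))⁻¹))
      = msum (fun k => X ^ k * (1 - X ^ (2*k+1))⁻¹) := rfl
  have key : F11 = msum (fun k => X ^ k * (1 - X ^ (2*k+1))⁻¹) := by
    rw [hF, main_eq]
  constructor
  · rw [key, hR]
  · intro m
    rw [key, coeff_msum]
    apply Finset.sum_pos'
    · intro n _
      rw [coeff_rhs_term]
      split_ifs <;> norm_num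
    · refine ⟨m, Finset.self_mem_range_succ m, ?_⟩
      rw [coeff_rhs_term, if_pos ⟨le_refl m, by simp⟩]
      norm_num
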